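/- Let A be an n×n real symmetric positive semidefinite matrix admitting a factorization A = FᵀF with F an m×n real matrix, and let B be an n×n real symmetric positive definite matrix. For any vectors u, v ∈ ℝᵐ with ‖u‖ ≤ 1, ‖v‖ ≤ 1, and uᵀv = 0, and any x ∈ ℝⁿ with xᵀAx > 0, the matrix H_x(u, v) = 2B − (1/(xᵀAx)^{1/2})·Fᵀ(uuᵀ + vvᵀ)F + (Ax)(Ax)ᵀ/(xᵀAx)^{3/2} satisfies H_x(u, v) ⪰ H_f(x), i.e., H_x(u, v) − H_f(x) is positive semidefinite, where H_f(x) = 2B − A/(xᵀAx)^{1/2} + (Ax)(Ax)ᵀ/(xᵀAx)^{3/2} is the Hessian of f at x. -/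

import Mathlib

open Matrix

lemma psd_smul {k : ℕ} {M : Matrix (Fin k) (Fin k) ℝ} (hM : M.PosSemidef) {c : ℝ}
    (hc : 0 ≤ c) : (c • M).PosSemidef := by
  refine posSemidef_iff_dotProduct_mulVec.mpr ⟨?_, fun y => ?_⟩
  · show (c • M)ᴴ = c • M
    rw [Matrix.conjTranspose_smul, hM.1]
    simp
  · have h0 := hM.dotProduct_mulVec_nonneg y
    rw [smul_mulVec, dotProduct_smul, smul_eq_mul]
    exact mul_nonneg hc h0

lemma psd_one_sub {m : ℕ} (u v : Fin m → ℝ) (hu : u ⬝ᵥ u ≤ 1) (hv : v ⬝ᵥ v ≤ 1)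
    (huv : u ⬝ᵥ v = 0) :
    ((1 : Matrix (Fin m) (Fin m) ℝ) - (vecMulVec u u + vecMulVec v v)).PosSemidef := by
  have hw : ∀ w : Fin m → ℝ, (vecMulVec w w).IsHermitian := by
    intro w
    ext i j
    simp [Matrix.conjTranspose_apply, Matrix.vecMulVec_apply, mul_comm]
  rw [posSemidef_iff_dotProduct_mulVec]
  constructor
  · exact Matrix.isHermitian_one.sub ((hw u).add (hw v))
  · intro y
    have h1 : ∀ w : Fin m → ℝ, y ⬝ᵥ (vecMulVec w w) *ᵥ y = (w ⬝ᵥ y) * (w ⬝ᵥ y) := by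
      intro w
      simp only [Matrix.mulVec, Matrix.vecMulVec_apply, dotProduct, Finset.sum_mul,
        Finset.mul_sum]
      apply Finset.sum_congr rfl
      intro i _
      apply Finset.sum_congr rfl
      intro j _
      ring
    have hquad : star y ⬝ᵥ ((1 : Matrix (Fin m) (Fin m) ℝ)
        - (vecMulVec u u + vecMulVec v v)) *ᵥ y
        = y ⬝ᵥ y - (u ⬝ᵥ y) * (u ⬝ᵥ y) - (v ⬝ᵥ y) * (v ⬝ᵥ y) := by
      simp only [star_trivial, Matrix.sub_mulVec, Matrix.add_mulVec, dotProduct_sub,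
        dotProduct_add, Matrix.one_mulVec]
      rw [h1, h1]; ring
    rw [hquad]
    set a := u ⬝ᵥ y with ha
    set b := v ⬝ᵥ y with hb
    have hz : (0:ℝ) ≤ (y - a • u - b • v) ⬝ᵥ (y - a • u - b • v) := by
      apply Finset.sum_nonneg; intro i _; exact mul_self_nonneg _
    have hexp : (y - a • u - b • v) ⬝ᵥ (y - a • u - b • v)
        = y ⬝ᵥ y - 2*a*a - 2*b*b + a*a*(u ⬝ᵥ u) + b*b*(v ⬝ᵥ v) := by
      have hyu : y ⬝ᵥ u = a := dotProduct_comm y u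
      have hyv : y ⬝ᵥ v = b := dotProduct_comm y v
      have hvu : v ⬝ᵥ u = 0 := by rw [dotProduct_comm]; exact huv
      simp [sub_dotProduct, dotProduct_sub, smul_dotProduct, dotProduct_smul, hyu, hyv,
        huv, hvu, smul_eq_mul]
      ring
    rw [hexp] at hz
    nlinarith [mul_nonneg (mul_self_nonneg a) (sub_nonneg.mpr hu),
      mul_nonneg (mul_self_nonneg b) (sub_nonneg.mpr hv)]


/-- Splitting: for `A = FᵀF`, vectors `u, v` with `‖u‖ ≤ 1`, `‖v‖ ≤ 1`, `uᵀv = 0`, and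
`x` with `xᵀAx > 0`, the split surrogate Hessian
`H_x(u, v) = 2B − Fᵀ(uuᵀ + vvᵀ)F/√(xᵀAx) + (Ax)(Ax)ᵀ/(xᵀAx)^{3/2}`
dominates the Hessian `H_f(x)` in the Loewner order. -/
theorem stmt_14 {n m : ℕ} (A B : Matrix (Fin n) (Fin n) ℝ)
    (F : Matrix (Fin m) (Fin n) ℝ)
    (hA : A.PosSemidef) (hAF : A = Fᵀ * F) (hB : B.PosDef)
    (u v : Fin m → ℝ) (hu : u ⬝ᵥ u ≤ 1) (hv : v ⬝ᵥ v ≤ 1) (huv : u ⬝ᵥ v = 0)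
    (x : Fin n → ℝ) (hx : 0 < x ⬝ᵥ A *ᵥ x) :
    ((((2 : ℝ) • B - (Real.sqrt (x ⬝ᵥ A *ᵥ x))⁻¹ • (Fᵀ * (vecMulVec u u + vecMulVec v v) * F)
        + ((Real.sqrt (x ⬝ᵥ A *ᵥ x)) ^ 3)⁻¹ • vecMulVec (A *ᵥ x) (A *ᵥ x))
      - ((2 : ℝ) • B - (Real.sqrt (x ⬝ᵥ A *ᵥ x))⁻¹ • A
        + ((Real.sqrt (x ⬝ᵥ A *ᵥ x)) ^ 3)⁻¹ • vecMulVec (A *ᵥ x) (A *ᵥ x)))).PosSemidef := by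
  have hsq : (0:ℝ) < Real.sqrt (x ⬝ᵥ A *ᵥ x) := Real.sqrt_pos.mpr hx
  have hdiff : (((2 : ℝ) • B - (Real.sqrt (x ⬝ᵥ A *ᵥ x))⁻¹ • (Fᵀ * (vecMulVec u u + vecMulVec v v) * F)
        + ((Real.sqrt (x ⬝ᵥ A *ᵥ x)) ^ 3)⁻¹ • vecMulVec (A *ᵥ x) (A *ᵥ x))
      - ((2 : ℝ) • B - (Real.sqrt (x ⬝ᵥ A *ᵥ x))⁻¹ • A
        + ((Real.sqrt (x ⬝ᵥ A *ᵥ x)) ^ 3)⁻¹ • vecMulVec (A *ᵥ x) (A *ᵥ x)))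
      = (Real.sqrt (x ⬝ᵥ A *ᵥ x))⁻¹ •
        (Fᵀ * ((1 : Matrix (Fin m) (Fin m) ℝ) - (vecMulVec u u + vecMulVec v v)) * F) := by
    rw [hAF]
    rw [Matrix.mul_sub, Matrix.sub_mul, Matrix.mul_one, smul_sub]
    abel
  rw [hdiff]
  have hM := psd_one_sub u v hu hv huv
  have h2 := hM.conjTranspose_mul_mul_same F
  have h3 : (Fᴴ : Matrix (Fin n) (Fin m) ℝ) = Fᵀ := rfl
  rw [h3] at h2
  exact psd_smul h2 (le_of_lt (inv_pos.mpr hsq))
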